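/- Let Y be a Hausdorff paracompact topological space of finite covering dimension, meaning there exists N ∈ ℕ such that every open cover of Y admits an open refinement in which each point of Y lies in at most N members. Let P be a property of open subsets of Y such that: (i) if P holds for an open set V and U ⊆ V is open, then P holds for U; (ii) every point of Y has an open neighbourhood satisfying P; (iii) for every family of pairwise disjoint open sets each satisfying P, their union satisfies P. Then Y admits a finite open cover all of whose members satisfy P. -/
import Mathlib


open Set

/-- A topological space has covering dimension at most `N` if every open cover admits an
open refinement in which every point lies in at most `N` members. -/
def HasCoveringDimLE (Y : Type*) [TopologicalSpace Y] (N : ℕ) : Prop :=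
  ∀ 𝒰 : Set (Set Y), (∀ U ∈ 𝒰, IsOpen U) → ⋃₀ 𝒰 = univ →
    ∃ 𝒱 : Set (Set Y), (∀ V ∈ 𝒱, IsOpen V) ∧ ⋃₀ 𝒱 = univ ∧
      (∀ V ∈ 𝒱, ∃ U ∈ 𝒰, V ⊆ U) ∧
      ∀ y : Y, {V ∈ 𝒱 | y ∈ V}.Finite ∧ {V ∈ 𝒱 | y ∈ V}.ncard ≤ N

/-- Let `Y` be a Hausdorff paracompact space of finite covering dimension
and let `P` be a property of open subsets of `Y` that is inherited by open subsets, holds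
near every point, and is preserved under unions of pairwise disjoint families.  Then `Y`
admits a finite open cover by sets satisfying `P`. -/
theorem finite_cover_of_local_property {Y : Type*} [TopologicalSpace Y]
    [T2Space Y] [ParacompactSpace Y]
    (hdim : ∃ N : ℕ, HasCoveringDimLE Y N)
    (P : Set Y → Prop)
    (hmono : ∀ U V : Set Y, IsOpen U → IsOpen V → U ⊆ V → P V → P U)
    (hloc : ∀ y : Y, ∃ U : Set Y, IsOpen U ∧ y ∈ U ∧ P U)
    (hdisj : ∀ 𝒰 : Set (Set Y), (∀ U ∈ 𝒰, IsOpen U) → 𝒰.PairwiseDisjoint id →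
      (∀ U ∈ 𝒰, P U) → P (⋃₀ 𝒰)) :
    ∃ 𝒱 : Finset (Set Y), (∀ V ∈ 𝒱, IsOpen V ∧ P V) ∧ ⋃₀ (𝒱 : Set (Set Y)) = univ := by
  classical
  obtain ⟨N, hN⟩ := hdim
  -- refine the cover by `P`-sets to a cover of order ≤ N
  obtain ⟨𝒱, h𝒱open, h𝒱cov, h𝒱ref, h𝒱ord⟩ :=
    hN {U | IsOpen U ∧ P U} (fun U hU => hU.1) (by
      apply eq_univ_of_forall
      intro y
      obtain ⟨U, hUo, hyU, hUP⟩ := hloc y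
      exact ⟨U, ⟨hUo, hUP⟩, hyU⟩)
  have h𝒱P : ∀ V ∈ 𝒱, P V := by
    intro V hV
    obtain ⟨U, ⟨hUo, hUP⟩, hsub⟩ := h𝒱ref V hV
    exact hmono V U (h𝒱open V hV) hUo hsub hUP
  -- a partition of unity subordinate to 𝒱
  obtain ⟨f, hf⟩ := PartitionOfUnity.exists_isSubordinate (s := (univ : Set Y))
      isClosed_univ (fun i : 𝒱 => (i : Set Y)) (fun i => h𝒱open i i.2)
      (by rw [← sUnion_eq_iUnion, h𝒱cov])
  -- the Wells sets
  set W : Set ↥𝒱 → Set Y := fun S =>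
    {y | (∀ i ∈ S, 0 < f i y) ∧ ∀ i ∈ S, ∀ j ∉ S, f j y < f i y} with hWdef
  -- each Wells set is contained in each member of S
  have hWsub : ∀ S : Set ↥𝒱, ∀ i ∈ S, W S ⊆ (i : Set Y) := by
    intro S i hi z hz
    have h1 : f i z ≠ 0 := ne_of_gt (hz.1 i hi)
    exact hf i (subset_tsupport _ h1)
  -- Wells sets are open
  have hWopen : ∀ S : Set ↥𝒱, S.Finite → IsOpen (W S) := by
    intro S hS
    rw [isOpen_iff_forall_mem_open]
    intro y hy
    obtain ⟨O, hO, hTfin⟩ := f.locallyFinite y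
    set T : Set ↥𝒱 := {i | (Function.support (f i) ∩ O).Nonempty} with hTdef
    refine ⟨interior O ∩ ⋂ i ∈ S, ({z | 0 < f i z} ∩ ⋂ j ∈ T \ S, {z | f j z < f i z}),
      ?_, ?_, ?_⟩
    · rintro z ⟨hzO, hzI⟩
      simp only [mem_iInter, mem_inter_iff, mem_setOf_eq] at hzI
      constructor
      · intro i hi; exact (hzI i hi).1
      · intro i hi j hj
        by_cases hjT : j ∈ T
        · exact (hzI i hi).2 j ⟨hjT, hj⟩
        · have hz0 : f j z = 0 := by
            by_contra h0
            exact hjT ⟨z, h0, interior_subset hzO⟩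
          rw [hz0]; exact (hzI i hi).1
    · refine IsOpen.inter isOpen_interior (hS.isOpen_biInter ?_)
      intro i _
      refine IsOpen.inter (isOpen_lt continuous_const (f i).continuous)
        ((hTfin.subset diff_subset).isOpen_biInter ?_)
      intro j _
      exact isOpen_lt (f j).continuous (f i).continuous
    · refine ⟨mem_interior_iff_mem_nhds.2 hO, ?_⟩
      simp only [mem_iInter, mem_inter_iff, mem_setOf_eq]
      intro i hi
      exact ⟨hy.1 i hi, fun j hj => hy.2 i hi j hj.2⟩
  -- disjointness of Wells sets of the same cardinality
  have hWdisj : ∀ S T : Set ↥𝒱, S.Finite → T.Finite → S.ncard = T.ncard → S ≠ T →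
      Disjoint (W S) (W T) := by
    intro S T hS hT hcard hne
    rw [Set.disjoint_left]
    intro z hzS hzT
    have hST : ¬S ⊆ T := by
      intro h
      exact hne (Set.eq_of_subset_of_ncard_le h hcard.ge hT)
    have hTS : ¬T ⊆ S := by
      intro h
      exact hne (Set.eq_of_subset_of_ncard_le h hcard.le hS).symm
    obtain ⟨i, hiS, hiT⟩ := not_subset.1 hST
    obtain ⟨j, hjT, hjS⟩ := not_subset.1 hTS
    have h1 : f j z < f i z := hzS.2 i hiS j hjS
    have h2 : f i z < f j z := hzT.2 j hjT i hiT
    linarith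
  -- the families of Wells sets of fixed cardinality
  set C : ℕ → Set (Set Y) := fun k =>
    {w | ∃ S : Set ↥𝒱, S.Finite ∧ S.Nonempty ∧ S.ncard = k ∧ w = W S} with hCdef
  have hCopen : ∀ k, ∀ w ∈ C k, IsOpen w := by
    rintro k w ⟨S, hSfin, _, _, rfl⟩
    exact hWopen S hSfin
  have hCP : ∀ k, P (⋃₀ C k) := by
    intro k
    refine hdisj (C k) (hCopen k) ?_ ?_
    · rintro u ⟨S, hSfin, _, hSk, rfl⟩ v ⟨T, hTfin, _, hTk, rfl⟩ huv
      have hST : S ≠ T := by rintro rfl; exact huv rfl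
      exact hWdisj S T hSfin hTfin (hSk.trans hTk.symm) hST
    · rintro w ⟨S, hSfin, ⟨i, hi⟩, _, rfl⟩
      exact hmono (W S) (i : Set Y) (hWopen S hSfin) (h𝒱open i i.2)
        (hWsub S i hi) (h𝒱P i i.2)
  refine ⟨(Finset.range (N + 1)).image (fun k => ⋃₀ C k), ?_, ?_⟩
  · intro V hV
    simp only [Finset.mem_image, Finset.mem_range] at hV
    obtain ⟨k, _, rfl⟩ := hV
    exact ⟨isOpen_sUnion (hCopen k), hCP k⟩
  · apply eq_univ_of_forall
    intro y
    set S : Set ↥𝒱 := {i | 0 < f i y} with hSdef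
    have hSfin : S.Finite := by
      apply (f.locallyFinite.point_finite y).subset
      intro i hi
      exact ne_of_gt hi
    -- S is nonempty
    have hsum : ∑ᶠ i, f i y = 1 := f.sum_eq_one (mem_univ y)
    have hSne : S.Nonempty := by
      by_contra h
      rw [not_nonempty_iff_eq_empty] at h
      have hz : ∀ i : ↥𝒱, f i y = 0 := by
        intro i
        have : i ∉ S := h ▸ notMem_empty i
        exact le_antisymm (not_lt.1 this) (f.nonneg i y)
      rw [finsum_eq_zero_of_forall_eq_zero hz] at hsum
      norm_num at hsum
    -- S has at most N elements
    have hScard : S.ncard ≤ N := by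
      have hsub : Subtype.val '' S ⊆ {V ∈ 𝒱 | y ∈ V} := by
        rintro V ⟨i, hi, rfl⟩
        exact ⟨i.2, hf i (subset_tsupport _ (ne_of_gt hi))⟩
      calc S.ncard = (Subtype.val '' S).ncard :=
            (Set.ncard_image_of_injective S Subtype.val_injective).symm
        _ ≤ {V ∈ 𝒱 | y ∈ V}.ncard := Set.ncard_le_ncard hsub (h𝒱ord y).1
        _ ≤ N := (h𝒱ord y).2
    have hyW : y ∈ W S := by
      refine ⟨fun i hi => hi, fun i hi j hj => ?_⟩
      exact lt_of_le_of_lt (not_lt.1 hj) hi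
    refine ⟨⋃₀ C S.ncard, ?_, ⟨W S, ⟨S, hSfin, hSne, rfl, rfl⟩, hyW⟩⟩
    simp only [Finset.coe_image, Finset.coe_range, mem_image, mem_Iio]
    exact ⟨S.ncard, by omega, rfl⟩
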